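/- For all nonnegative integers n ≥ k, Σ_{m=k}^{n} S2_C(n, m) · S1_C(m, k) = δ_{n,k} (Kronecker delta, as an element of K), where S1_C and S2_C denote the Stirling-Carlitz numbers of the first and second kind respectively. -/

import Mathlib

open scoped Classical
open PowerSeries Finset

noncomputable section

variable (F : Type) [Field F] [Fintype F]

/-- The rational function field `K = 𝔽_r(T)`. -/
abbrev K : Type := RatFunc F

/-- `r`, the cardinality of the finite field of constants. -/
def rr : ℕ := Fintype.card F

/-- The variable `T` of the rational function field. -/
def Tv : K F := RatFunc.X

/-- `[i] = T^{r^i} - T`. -/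
def br (i : ℕ) : K F := Tv F ^ (rr F) ^ i - Tv F

/-- `D_0 = 1`, `D_i = [i] · D_{i-1}^r`. -/
def D : ℕ → K F
  | 0 => 1
  | i + 1 => br F (i + 1) * D i ^ rr F

/-- `L_0 = 1`, `L_i = [i] · L_{i-1}`. -/
def L : ℕ → K F
  | 0 => 1
  | i + 1 => br F (i + 1) * L i

/-- The Carlitz factorial `Π(n) = ∏_j D_j^{c_j}`, where `c_j = n / r^j % r` are the
base-`r` digits of `n` (all digits with index `> n` vanish since `r ≥ 2`). -/
def Cf (n : ℕ) : K F := ∏ j ∈ Finset.range (n + 1), D F j ^ (n / (rr F) ^ j % rr F)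

/-- The Carlitz logarithm `log_C(z) = Σ_{i ≥ 0} (-1)^i z^{r^i} / L_i`: the coefficient of
`z^m` is `(-1)^i / L_i` if `m = r^i` and `0` otherwise (note `i ≤ r^i = m` since `r ≥ 2`). -/
def logC : PowerSeries (K F) :=
  PowerSeries.mk fun m =>
    ∑ i ∈ Finset.range (m + 1), if m = (rr F) ^ i then (-1 : K F) ^ i / L F i else 0

/-- The Carlitz exponential `e_C(z) = Σ_{i ≥ 0} z^{r^i} / D_i`. -/
def eC : PowerSeries (K F) :=
  PowerSeries.mk fun m =>
    ∑ i ∈ Finset.range (m + 1), if m = (rr F) ^ i then 1 / D F i else 0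

/-- The power series `log_C(z)/z`. -/
def logCdivZ : PowerSeries (K F) :=
  PowerSeries.mk fun n => PowerSeries.coeff (n + 1) (logC F)

/-- The power series `e_C(z)/z`. -/
def eCdivZ : PowerSeries (K F) :=
  PowerSeries.mk fun n => PowerSeries.coeff (n + 1) (eC F)

/-! ### Auxiliary lemmas -/

set_option linter.unusedSectionVars false
set_option maxHeartbeats 1000000
set_option synthInstance.maxHeartbeats 100000

theorem two_le_rr : 2 ≤ rr F := Fintype.one_lt_card

theorem br_zero' : br F 0 = 0 := by simp [br]

theorem br_ne_zero (i : ℕ) (hi : 1 ≤ i) : br F i ≠ 0 := by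
  have h2 : 2 ≤ (rr F) ^ i := le_trans (two_le_rr F) (Nat.le_self_pow (by omega) _)
  intro hc
  have hpoly : (Polynomial.X ^ (rr F) ^ i - Polynomial.X : Polynomial F) = 0 := by
    apply RatFunc.algebraMap_injective F
    rw [map_zero, map_sub, map_pow, RatFunc.algebraMap_X]
    exact hc
  have hco := congrArg (fun q => Polynomial.coeff q ((rr F) ^ i)) hpoly
  have hne : ¬ (1 = (rr F) ^ i) := fun h => by omega
  simp only [Polynomial.coeff_sub, Polynomial.coeff_X_pow, if_pos rfl, Polynomial.coeff_zero,
    Polynomial.coeff_X, if_neg hne, sub_zero] at hco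
  exact one_ne_zero hco

theorem D_ne_zero (i : ℕ) : D F i ≠ 0 := by
  induction i with
  | zero => simp [D]
  | succ i ih =>
    simp only [D]
    exact mul_ne_zero (br_ne_zero F (i+1) (by omega)) (pow_ne_zero _ ih)

theorem L_ne_zero (i : ℕ) : L F i ≠ 0 := by
  induction i with
  | zero => simp [L]
  | succ i ih =>
    simp only [L]
    exact mul_ne_zero (br_ne_zero F (i+1) (by omega)) ih

theorem Cf_ne_zero (n : ℕ) : Cf F n ≠ 0 :=
  Finset.prod_ne_zero_iff.mpr fun j _ => pow_ne_zero _ (D_ne_zero F j)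

/-! ### Frobenius coefficient lemmas -/

theorem coeff_pow_p (p : ℕ) [Fact p.Prime] [CharP (K F) p] (f : PowerSeries (K F)) (n : ℕ) :
    coeff n (f ^ p) = if p ∣ n then (coeff (n / p) f) ^ p else 0 := by
  have hp : 0 < p := (Fact.out : p.Prime).pos
  set P := trunc (n + 1) f with hP
  have h1 : coeff n (f ^ p) = (P ^ p).coeff n := by
    have := trunc_trunc_pow f (n + 1) p
    have h2 : (trunc (n+1) ((P : PowerSeries (K F)) ^ p)).coeff n
        = (trunc (n+1) (f ^ p)).coeff n := by rw [this]
    rw [PowerSeries.coeff_trunc, PowerSeries.coeff_trunc] at h2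
    simp only [Nat.lt_succ_self, if_true] at h2
    rw [← h2, ← Polynomial.coeff_coe, ← Polynomial.coe_pow]
  rw [h1, ← Polynomial.map_frobenius_expand (p := p) (f := P), Polynomial.coeff_map, Polynomial.coeff_expand hp]
  split_ifs with h
  · rw [frobenius_def]
    congr 1
    rw [hP, PowerSeries.coeff_trunc, if_pos (Nat.lt_succ_of_le (Nat.div_le_self n p))]
  · simp [frobenius_def, zero_pow hp.ne']

theorem coeff_pow_ppow (p : ℕ) [Fact p.Prime] [CharP (K F) p] (f : PowerSeries (K F)) (e n : ℕ) :
    coeff n (f ^ p ^ e) = if p ^ e ∣ n then (coeff (n / p ^ e) f) ^ p ^ e else 0 := by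
  have hp : 0 < p := (Fact.out : p.Prime).pos
  induction e generalizing n with
  | zero => simp
  | succ e ih =>
    rw [pow_succ, pow_mul, coeff_pow_p, ih]
    by_cases h1 : p ∣ n
    · by_cases h2 : p ^ e ∣ n / p
      · have h3 : p ^ e * p ∣ n := by
          rw [mul_comm]
          exact (Nat.dvd_div_iff_mul_dvd h1).mp h2
        rw [if_pos h1, if_pos h2, if_pos h3, Nat.div_div_eq_div_mul, mul_comm p (p^e), ← pow_mul]
      · have h3 : ¬ p ^ e * p ∣ n := fun hc =>
          h2 ((Nat.dvd_div_iff_mul_dvd h1).mpr (by rwa [mul_comm] at hc))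
        rw [if_pos h1, if_neg h2, if_neg h3, zero_pow hp.ne']
    · have h3 : ¬ p ^ e * p ∣ n := fun hc => h1 ((dvd_mul_left p (p^e)).trans hc)
      rw [if_neg h1, if_neg h3]

/-! ### The key telescoping identity -/

theorem frob (p s : ℕ) [Fact p.Prime] [CharP (K F) p] (hcard : rr F = p ^ s)
    (x y : K F) (j : ℕ) : (x - y) ^ (rr F) ^ j = x ^ (rr F) ^ j - y ^ (rr F) ^ j := by
  rw [hcard, ← pow_mul]
  exact sub_pow_char_pow x y (s*j)

theorem br_add (p s : ℕ) [Fact p.Prime] [CharP (K F) p] (hcard : rr F = p ^ s)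
    (j N : ℕ) (h : j ≤ N) : br F N = br F j + (br F (N - j)) ^ (rr F) ^ j := by
  unfold br
  rw [frob F p s hcard, ← pow_mul, ← pow_add, Nat.sub_add_cancel h]
  ring

theorem keyS (p s : ℕ) [Fact p.Prime] [CharP (K F) p] (hcard : rr F = p ^ s)
    (N : ℕ) (hN : 1 ≤ N) :
    ∑ j ∈ Finset.range (N + 1), ((-1 : K F) ^ j / L F j) * (1 / D F (N - j)) ^ (rr F) ^ j
      = 0 := by
  have hbrN : br F N ≠ 0 := br_ne_zero F N hN
  set W : ℕ → K F := fun j =>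
    if j = 0 then 0 else (-1 : K F) ^ (j - 1) / (L F (j - 1) * D F (N - j) ^ (rr F) ^ j)
    with hW
  have key : ∀ j, j < N →
      br F N * (((-1 : K F) ^ j / L F j) * (1 / D F (N - j)) ^ (rr F) ^ j)
        = W (j + 1) - W j := by
    intro j hj
    obtain ⟨u, hu⟩ : ∃ u, N - j = u + 1 := ⟨N - j - 1, by omega⟩
    have hDu : D F (N - j) = br F (N - j) * D F u ^ rr F := by rw [hu]; rfl
    have hbrj : br F (N - j) ≠ 0 := br_ne_zero F _ (by omega)
    have hNsj : N - (j + 1) = u := by omega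
    rw [br_add F p s hcard j N (le_of_lt hj)]
    rcases Nat.eq_zero_or_pos j with rfl | hjpos
    · simp only [hW]
      rw [br_zero']
      simp only [pow_zero, pow_one, if_neg (Nat.one_ne_zero)]
      rw [hNsj, hDu]
      have h1 : L F 0 = 1 := rfl
      have hd : D F u ≠ 0 := D_ne_zero F u
      field_simp
      rw [if_pos trivial]
      ring
    · obtain ⟨t, ht⟩ : ∃ t, j = t + 1 := ⟨j - 1, by omega⟩
      have hLj : L F j = br F j * L F t := by rw [ht]; rfl
      simp only [hW, if_neg (by omega : ¬ j + 1 = 0), if_neg (by omega : ¬ j = 0)]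
      have e1 : j + 1 - 1 = j := by omega
      have e2 : j - 1 = t := by omega
      rw [e1, e2, hNsj, hLj, hDu]
      have hfrob : (br F (N - j) * D F u ^ rr F) ^ (rr F) ^ j
          = br F (N - j) ^ (rr F) ^ j * D F u ^ ((rr F) ^ (j+1)) := by
        rw [mul_pow, ← pow_mul, ← pow_succ']
      rw [one_div, inv_pow, hfrob]
      have hb : br F j ≠ 0 := br_ne_zero F j (by omega)
      have hbq : br F (N - j) ^ (rr F) ^ j ≠ 0 := pow_ne_zero _ hbrj
      have hd : D F u ≠ 0 := D_ne_zero F u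
      have hdq : D F u ^ (rr F) ^ (j + 1) ≠ 0 := pow_ne_zero _ hd
      have hl : L F t ≠ 0 := L_ne_zero F t
      have hsign : (-1 : K F) ^ j = -(-1 : K F) ^ t := by rw [ht, pow_succ]; ring
      rw [hsign]
      field_simp
      ring
  have hsum : ∑ j ∈ Finset.range N,
      br F N * (((-1 : K F) ^ j / L F j) * (1 / D F (N - j)) ^ (rr F) ^ j) = W N - W 0 := by
    rw [Finset.sum_congr rfl (fun j hj => key j (Finset.mem_range.mp hj))]
    exact Finset.sum_range_sub W N
  have hlast : br F N * (((-1 : K F) ^ N / L F N) * (1 / D F (N - N)) ^ (rr F) ^ N) = - W N := by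
    obtain ⟨t, ht⟩ : ∃ t, N = t + 1 := ⟨N - 1, by omega⟩
    have hLN : L F N = br F N * L F t := by rw [ht]; rfl
    simp only [hW, if_neg (by omega : ¬ N = 0)]
    have e2 : N - 1 = t := by omega
    have e3 : N - N = 0 := by omega
    rw [e2, e3]
    have hD0 : D F 0 = 1 := rfl
    rw [hD0, hLN]
    have hl : L F t ≠ 0 := L_ne_zero F t
    have hsign : (-1 : K F) ^ N = -(-1 : K F) ^ t := by rw [ht, pow_succ]; ring
    rw [hsign]
    field_simp
    ring
  have hpeel := Finset.sum_range_succ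
    (fun j => br F N * (((-1 : K F) ^ j / L F j) * (1 / D F (N - j)) ^ (rr F) ^ j)) N
  have htot : ∑ j ∈ Finset.range (N + 1),
      br F N * (((-1 : K F) ^ j / L F j) * (1 / D F (N - j)) ^ (rr F) ^ j) = 0 := by
    rw [hpeel, hsum, hlast]
    simp [hW]
  rw [← Finset.mul_sum] at htot
  exact (mul_eq_zero.mp htot).resolve_left hbrN

/-! ### Coefficients of `eC` and `logC` -/

theorem constCoeff_eC : constantCoeff (eC F) = 0 := by
  rw [← coeff_zero_eq_constantCoeff_apply]
  simp [eC, two_le_rr]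

theorem constCoeff_logC : constantCoeff (logC F) = 0 := by
  rw [← coeff_zero_eq_constantCoeff_apply]
  simp [logC]

theorem coeff_eC_rpow (i : ℕ) : coeff ((rr F) ^ i) (eC F) = 1 / D F i := by
  rw [eC, coeff_mk]
  rw [Finset.sum_eq_single i]
  · rw [if_pos rfl]
  · intro j _ hji
    rw [if_neg (fun hc => hji (Nat.pow_right_injective (two_le_rr F) hc.symm))]
  · intro hi
    exact absurd (Finset.mem_range.mpr (Nat.lt_succ_of_lt
      (Nat.lt_pow_self (n := i) (two_le_rr F)))) hi

theorem coeff_eC_not (m : ℕ) (h : ∀ i, m ≠ (rr F) ^ i) : coeff m (eC F) = 0 := by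
  rw [eC, coeff_mk]
  exact Finset.sum_eq_zero fun i _ => if_neg (h i)

/-- If the constant coefficient vanishes, low coefficients of powers vanish. -/
theorem coeff_pow_eq_zero {f : PowerSeries (K F)} (hf : constantCoeff f = 0)
    {n m : ℕ} (h : n < m) : coeff n (f ^ m) = 0 := by
  have hd : (X : PowerSeries (K F)) ^ m ∣ f ^ m :=
    pow_dvd_pow_of_dvd (X_dvd_iff.mpr hf) m
  exact X_pow_dvd_iff.mp hd n h

/-! ### Composition with `eC` -/

/-- Composition of a power series with `eC`, defined coefficientwise. -/
def cmpE (f : PowerSeries (K F)) : PowerSeries (K F) :=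
  PowerSeries.mk fun n =>
    ∑ m ∈ Finset.range (n + 1), coeff m f * coeff n (eC F ^ m)

theorem coeff_aeval_trunc (f : PowerSeries (K F)) (n m : ℕ) (hm : m ≤ n) :
    coeff m (Polynomial.aeval (eC F) (trunc (n + 1) f))
      = ∑ i ∈ Finset.range (m + 1), coeff i f * coeff m (eC F ^ i) := by
  rw [Polynomial.aeval_eq_sum_range' (natDegree_trunc_lt f n), map_sum]
  have h1 : ∀ i ∈ Finset.range (n + 1),
      coeff m ((trunc (n + 1) f).coeff i • eC F ^ i)
        = coeff i f * coeff m (eC F ^ i) := by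
    intro i hi
    rw [map_smul, smul_eq_mul, PowerSeries.coeff_trunc, if_pos (Finset.mem_range.mp hi)]
  rw [Finset.sum_congr rfl h1]
  refine (Finset.sum_subset (Finset.range_subset_range.mpr (by omega)) ?_).symm
  intro i _ hi
  rw [coeff_pow_eq_zero F (constCoeff_eC F) (by
    have := Finset.mem_range.not.mp hi; omega), mul_zero]

theorem coeff_cmpE (f : PowerSeries (K F)) (n m : ℕ) (hm : m ≤ n) :
    coeff m (cmpE F f) = coeff m (Polynomial.aeval (eC F) (trunc (n + 1) f)) := by
  rw [cmpE, coeff_mk, coeff_aeval_trunc F f n m hm]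

theorem coeff_aeval_congr (P Q : Polynomial (K F)) (n : ℕ)
    (h : ∀ d, d ≤ n → P.coeff d = Q.coeff d) :
    coeff n (Polynomial.aeval (eC F) P) = coeff n (Polynomial.aeval (eC F) Q) := by
  have hdvd : (Polynomial.X : Polynomial (K F)) ^ (n + 1) ∣ P - Q :=
    Polynomial.X_pow_dvd_iff.mpr fun d hd => by
      rw [Polynomial.coeff_sub, h d (by omega), sub_self]
  obtain ⟨R, hR⟩ := hdvd
  have heq : Polynomial.aeval (eC F) P - Polynomial.aeval (eC F) Q
      = eC F ^ (n + 1) * Polynomial.aeval (eC F) R := by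
    rw [← map_sub, hR, map_mul, map_pow, Polynomial.aeval_X]
  have h0 : coeff n (Polynomial.aeval (eC F) P - Polynomial.aeval (eC F) Q) = 0 := by
    rw [heq]
    exact X_pow_dvd_iff.mp
      (dvd_mul_of_dvd_left (pow_dvd_pow_of_dvd (X_dvd_iff.mpr (constCoeff_eC F)) _) _)
      n (Nat.lt_succ_self n)
  rw [map_sub, sub_eq_zero] at h0
  exact h0

theorem cmpE_one : cmpE F 1 = 1 := by
  ext n
  rw [cmpE, coeff_mk]
  have h1 : ∀ m ∈ Finset.range (n + 1),
      coeff m (1 : PowerSeries (K F)) * coeff n (eC F ^ m)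
        = if m = 0 then coeff n ((1 : PowerSeries (K F))) else 0 := by
    intro m _
    rw [PowerSeries.coeff_one]
    split_ifs with h
    · subst h; rw [pow_zero, one_mul]
    · rw [zero_mul]
  rw [Finset.sum_congr rfl h1, Finset.sum_ite_eq' (Finset.range (n + 1)) 0,
    if_pos (Finset.mem_range.mpr (by omega))]

theorem cmpE_mul (f g : PowerSeries (K F)) : cmpE F (f * g) = cmpE F f * cmpE F g := by
  ext n
  rw [coeff_cmpE F (f * g) n n le_rfl, PowerSeries.coeff_mul]
  have h1 : ∀ pq ∈ Finset.HasAntidiagonal.antidiagonal n,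
      coeff pq.1 (cmpE F f) * coeff pq.2 (cmpE F g)
        = coeff pq.1 (Polynomial.aeval (eC F) (trunc (n + 1) f))
          * coeff pq.2 (Polynomial.aeval (eC F) (trunc (n + 1) g)) := by
    intro pq hpq
    have hs := Finset.HasAntidiagonal.antidiagonal.fst_le hpq
    have ht := Finset.HasAntidiagonal.antidiagonal.snd_le hpq
    rw [coeff_cmpE F f n pq.1 hs, coeff_cmpE F g n pq.2 ht]
  rw [Finset.sum_congr rfl h1, ← PowerSeries.coeff_mul, ← map_mul]
  apply coeff_aeval_congr
  intro d hd
  have hmul := trunc_trunc_mul_trunc (n := n + 1) f g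
  have hco := congrArg (fun q => Polynomial.coeff q d) hmul
  simp only [PowerSeries.coeff_trunc, if_pos (by omega : d < n + 1)] at hco
  rw [PowerSeries.coeff_trunc, if_pos (by omega : d < n + 1), ← hco, ← Polynomial.coe_mul,
    Polynomial.coeff_coe]

theorem cmpE_pow (f : PowerSeries (K F)) (k : ℕ) : cmpE F (f ^ k) = cmpE F f ^ k := by
  induction k with
  | zero => simpa using cmpE_one F
  | succ k ih => rw [pow_succ, pow_succ, cmpE_mul, ih]

/-! ### `cmp logC = X` -/

theorem cmpE_logC : cmpE F (logC F) = X := by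
  set p := ringChar F with hpdef
  haveI hfp : Fact p.Prime := ⟨CharP.char_is_prime F p⟩
  haveI : CharP (K F) p := charP_of_injective_algebraMap (algebraMap F (RatFunc F)).injective p
  obtain ⟨s, hp, hcard0⟩ := FiniteField.card F p
  have hcard : rr F = p ^ (s : ℕ) := hcard0
  have hr2 : 2 ≤ rr F := two_le_rr F
  ext n
  rw [cmpE, coeff_mk, PowerSeries.coeff_X]
  -- rewrite the sum as a sum over `i`
  have step1 : ∑ m ∈ Finset.range (n + 1), coeff m (logC F) * coeff n (eC F ^ m)
      = ∑ i ∈ Finset.range (n + 1), (if (rr F) ^ i ≤ n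
          then ((-1 : K F) ^ i / L F i) * coeff n (eC F ^ (rr F) ^ i) else 0) := by
    have e1 : ∀ m ∈ Finset.range (n + 1),
        coeff m (logC F) * coeff n (eC F ^ m)
          = ∑ i ∈ Finset.range (n + 1),
              (if m = (rr F) ^ i
                then ((-1 : K F) ^ i / L F i) * coeff n (eC F ^ m) else 0) := by
      intro m hm
      rw [logC, coeff_mk, Finset.sum_mul]
      refine Finset.sum_subset (Finset.range_subset_range.mpr (by
        exact Nat.succ_le_succ (Nat.lt_succ_iff.mp (Finset.mem_range.mp hm)))) ?_ |>.trans ?_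
      · intro i hi hni
        have him : m < i := by
          have := Finset.mem_range.not.mp hni; omega
        have : ¬ m = (rr F) ^ i := by
          intro hc
          have : i < (rr F) ^ i := Nat.lt_pow_self (n := i) hr2
          omega
        rw [if_neg this, zero_mul]
      · exact Finset.sum_congr rfl fun i _ => by rw [ite_mul, zero_mul]
    rw [Finset.sum_congr rfl e1, Finset.sum_comm]
    refine Finset.sum_congr rfl fun i _ => ?_
    rw [Finset.sum_ite_eq' (Finset.range (n + 1)) ((rr F) ^ i)
      (fun m => ((-1 : K F) ^ i / L F i) * coeff n (eC F ^ m))]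
    congr 1
    rw [Finset.mem_range, Nat.lt_succ_iff]
  rw [step1]
  by_cases hex : ∃ N, n = (rr F) ^ N
  · obtain ⟨N, rfl⟩ := hex
    have hNn : N ≤ (rr F) ^ N := (Nat.lt_pow_self (n := N) hr2).le
    have step2 : ∑ i ∈ Finset.range ((rr F) ^ N + 1), (if (rr F) ^ i ≤ (rr F) ^ N
          then ((-1 : K F) ^ i / L F i) * coeff ((rr F) ^ N) (eC F ^ (rr F) ^ i) else 0)
        = ∑ i ∈ Finset.range (N + 1),
            ((-1 : K F) ^ i / L F i) * (1 / D F (N - i)) ^ (rr F) ^ i := by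
      have conv1 : ∀ i, (if (rr F) ^ i ≤ (rr F) ^ N
            then ((-1 : K F) ^ i / L F i) * coeff ((rr F) ^ N) (eC F ^ (rr F) ^ i) else 0)
          = (if i ≤ N
            then ((-1 : K F) ^ i / L F i) * coeff ((rr F) ^ N) (eC F ^ (rr F) ^ i) else 0) :=
        fun i => if_congr (Nat.pow_le_pow_iff_right hr2) rfl rfl
      rw [Finset.sum_congr rfl fun i _ => conv1 i]
      have conv2 : ∑ i ∈ Finset.range (N + 1), (if i ≤ N
            then ((-1 : K F) ^ i / L F i) * coeff ((rr F) ^ N) (eC F ^ (rr F) ^ i) else 0)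
          = ∑ i ∈ Finset.range ((rr F) ^ N + 1), (if i ≤ N
            then ((-1 : K F) ^ i / L F i) * coeff ((rr F) ^ N) (eC F ^ (rr F) ^ i) else 0) := by
        refine Finset.sum_subset (Finset.range_subset_range.mpr (by omega : N + 1 ≤ (rr F) ^ N + 1)) ?_
        intro i _ hi
        have : N < i := by have := Finset.mem_range.not.mp hi; omega
        exact if_neg (by omega)
      rw [← conv2]
      refine Finset.sum_congr rfl fun i hi => ?_
      have hiN : i ≤ N := Nat.lt_succ_iff.mp (Finset.mem_range.mp hi)
      rw [if_pos hiN]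
      congr 1
      have hpow : (rr F) ^ i = p ^ (s * i) := by rw [hcard, ← pow_mul]
      have hdvd : p ^ (s * i) ∣ (rr F) ^ N := by
        rw [← hpow]
        exact pow_dvd_pow _ hiN
      rw [hpow, coeff_pow_ppow, if_pos hdvd, ← hpow]
      have hdiv : (rr F) ^ N / (rr F) ^ i = (rr F) ^ (N - i) :=
        Nat.pow_div hiN (by omega)
      rw [hdiv, coeff_eC_rpow]
    rw [step2]
    rcases Nat.eq_zero_or_pos N with rfl | hN
    · simp [L, D]
    · rw [keyS F p (s : ℕ) hcard N hN, if_neg]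
      have : 2 ≤ (rr F) ^ N := le_trans hr2 (Nat.le_self_pow (by omega) _)
      omega
  · -- n is not a power of r: every term vanishes, and n ≠ 1
    have hn1 : ¬ n = 1 := fun hc => hex ⟨0, by simpa using hc⟩
    rw [if_neg hn1]
    refine Finset.sum_eq_zero fun i _ => ?_
    split_ifs with hle
    · have hpow : (rr F) ^ i = p ^ (s * i) := by rw [hcard, ← pow_mul]
      rw [hpow, coeff_pow_ppow]
      split_ifs with hdvd
      · rw [← hpow]
        have hz : coeff (n / (rr F) ^ i) (eC F) = 0 := by
          apply coeff_eC_not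
          intro j hc
          apply hex
          refine ⟨i + j, ?_⟩
          rw [← hpow] at hdvd
          rw [pow_add, ← hc, Nat.mul_div_cancel' hdvd]
        rw [hz, zero_pow (by positivity), mul_zero]
      · rw [mul_zero]
    · rfl

/-! ### The main theorem -/

/-- Orthogonality (Theorem, second identity): for `n ≥ k`,
`Σ_{m=k}^n S2_C(n, m) · S1_C(m, k) = δ_{n,k}`. -/
theorem stirlingCarlitz_orthogonality_second
    (S1C S2C : ℕ → ℕ → K F)
    (hS1C : ∀ n k : ℕ,
      PowerSeries.coeff n (logC F ^ k) / Cf F k = S1C n k / Cf F n)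
    (hS2C : ∀ n k : ℕ,
      PowerSeries.coeff n (eC F ^ k) / Cf F k = S2C n k / Cf F n)
    (n k : ℕ) (hkn : k ≤ n) :
    ∑ m ∈ Finset.Icc k n, S2C n m * S1C m k = if n = k then (1 : K F) else 0 := by
  have hs1 : ∀ m j : ℕ, S1C m j = Cf F m * coeff m (logC F ^ j) / Cf F j := by
    intro m j
    have h := hS1C m j
    rw [div_eq_div_iff (Cf_ne_zero F j) (Cf_ne_zero F m)] at h
    rw [eq_div_iff (Cf_ne_zero F j), ← h]; ring
  have hs2 : ∀ m j : ℕ, S2C m j = Cf F m * coeff m (eC F ^ j) / Cf F j := by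
    intro m j
    have h := hS2C m j
    rw [div_eq_div_iff (Cf_ne_zero F j) (Cf_ne_zero F m)] at h
    rw [eq_div_iff (Cf_ne_zero F j), ← h]; ring
  have hterm : ∀ m : ℕ, S2C n m * S1C m k
      = (Cf F n / Cf F k) * (coeff m (logC F ^ k) * coeff n (eC F ^ m)) := by
    intro m
    rw [hs1, hs2]
    have hm := Cf_ne_zero F m
    have hn := Cf_ne_zero F n
    have hk := Cf_ne_zero F k
    field_simp
  rw [Finset.sum_congr rfl fun m _ => hterm m, ← Finset.mul_sum]
  have hIcc : Finset.Icc k n ⊆ Finset.range (n + 1) := by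
    intro x hx
    rw [Finset.mem_range, Nat.lt_succ_iff]
    exact (Finset.mem_Icc.mp hx).2
  have hext : ∑ m ∈ Finset.Icc k n,
      coeff m (logC F ^ k) * coeff n (eC F ^ m)
      = ∑ m ∈ Finset.range (n + 1),
          coeff m (logC F ^ k) * coeff n (eC F ^ m) := by
    refine Finset.sum_subset hIcc ?_
    intro m hm hnotin
    have hmn : m ≤ n := Nat.lt_succ_iff.mp (Finset.mem_range.mp hm)
    have hmk : m < k := by
      rcases Nat.lt_or_ge m k with h | h
      · exact h
      · exact absurd (Finset.mem_Icc.mpr ⟨h, hmn⟩) hnotin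
    rw [coeff_pow_eq_zero F (constCoeff_logC F) hmk, zero_mul]
  rw [hext]
  have hcomp : ∑ m ∈ Finset.range (n + 1),
      coeff m (logC F ^ k) * coeff n (eC F ^ m)
      = coeff n (cmpE F (logC F ^ k)) := by
    rw [cmpE, coeff_mk]
  rw [hcomp, cmpE_pow, cmpE_logC, PowerSeries.coeff_X_pow]
  split_ifs with h
  · subst h
    rw [mul_one, div_self (Cf_ne_zero F n)]
  · rw [mul_zero]
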